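/- Let γ ∈ {0,1}³, |γ| = γ₀+γ₁+γ₂, and suppose ψ(x) = |x-α₀²|^{γ₀/2}|x-α₁²|^{γ₁/2}|x-α₂²|^{γ₂/2} φ(x) satisfies A(x)ψ'' + ½A'(x)ψ' = ¼(k(k+1)x - λ)ψ where A(x) = (x-α₀²)(x-α₁²)(x-α₂²). Then φ satisfies the generalized Lamé equation A(x)φ'' + Σⱼ(γⱼ+½)∏_{l≠j}(x-α_l²) φ' = ¼((k-|γ|)(k+|γ|+1)x - λ + D(α,γ))φ, where D(α,γ) = (α₀²+α₁²)γ₂ + (α₀²+α₂²)γ₁ + (α₁²+α₂²)γ₀ + 2γ₀γ₁α₂² + 2γ₁γ₂α₀² + 2γ₀γ₂α₁². -/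

import Mathlib

set_option maxHeartbeats 2000000

lemma abs_rpow_hasDerivAt (a c t : ℝ) (ht : t ≠ a) :
    HasDerivAt (fun s => |s - a| ^ c) (c * |t - a| ^ c / (t - a)) t := by
  rcases lt_or_gt_of_ne ht with h | h
  · have h1 : HasDerivAt (fun s : ℝ => a - s) (-1) t := by
      exact (hasDerivAt_id t).const_sub a
    have h2 : HasDerivAt (fun y : ℝ => y ^ c) (c * (a - t) ^ (c - 1)) (a - t) :=
      Real.hasDerivAt_rpow_const (Or.inl (by linarith))
    have h3 := h2.comp t h1
    have heq : (fun s : ℝ => |s - a| ^ c) =ᶠ[nhds t] (fun s => (a - s) ^ c) := by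
      filter_upwards [eventually_lt_nhds h] with s hs
      rw [abs_of_neg (by linarith), neg_sub]
    have h4 : c * (a - t) ^ (c - 1) * -1 = c * |t - a| ^ c / (t - a) := by
      rw [abs_of_neg (by linarith), Real.rpow_sub_one (by linarith : a - t ≠ 0)]
      have : -(t - a) = a - t := by ring
      rw [this]
      rw [show (t - a : ℝ) = -(a - t) by ring, div_neg, div_eq_mul_inv]
      ring
    exact h4 ▸ (h3.congr_of_eventuallyEq heq)
  · have h1 : HasDerivAt (fun s : ℝ => s - a) 1 t := by
      exact (hasDerivAt_id t).sub_const a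
    have h2 : HasDerivAt (fun y : ℝ => y ^ c) (c * (t - a) ^ (c - 1)) (t - a) :=
      Real.hasDerivAt_rpow_const (Or.inl (by intro hc; apply ht; linarith [sub_eq_zero.mp hc]))
    have h3 := h2.comp t h1
    have heq : (fun s : ℝ => |s - a| ^ c) =ᶠ[nhds t] (fun s => (s - a) ^ c) := by
      filter_upwards [eventually_gt_nhds h] with s hs
      rw [abs_of_pos (by linarith)]
    have h4 : c * (t - a) ^ (c - 1) * 1 = c * |t - a| ^ c / (t - a) := by
      rw [abs_of_pos (by linarith), Real.rpow_sub_one (by intro hc; apply ht; linarith [sub_eq_zero.mp hc])]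
      ring
    exact h4 ▸ (h3.congr_of_eventuallyEq heq)


lemma lame_I1 (a₀ a₁ a₂ t c₀ c₁ c₂ : ℝ) (h₀ : t - a₀ ≠ 0) (h₁ : t - a₁ ≠ 0) (h₂ : t - a₂ ≠ 0) :
    2 * ((t - a₀) * (t - a₁) * (t - a₂)) *
        (c₀ / 2 * (t - a₀)⁻¹ + c₁ / 2 * (t - a₁)⁻¹ + c₂ / 2 * (t - a₂)⁻¹) +
      (1 / 2) * ((t - a₀) * (t - a₁) + (t - a₀) * (t - a₂) + (t - a₁) * (t - a₂)) =
    (c₀ + 1 / 2) * ((t - a₁) * (t - a₂)) + (c₁ + 1 / 2) * ((t - a₀) * (t - a₂)) +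
      (c₂ + 1 / 2) * ((t - a₀) * (t - a₁)) := by
  field_simp
  ring

lemma lame_I2 (γ₀ γ₁ γ₂ : ℕ) (hγ₀ : γ₀ ≤ 1) (hγ₁ : γ₁ ≤ 1) (hγ₂ : γ₂ ≤ 1)
    (a₀ a₁ a₂ t : ℝ) (h₀ : t - a₀ ≠ 0) (h₁ : t - a₁ ≠ 0) (h₂ : t - a₂ ≠ 0) :
    ((t - a₀) * (t - a₁) * (t - a₂)) *
        (((γ₀:ℝ) / 2 * (t - a₀)⁻¹ + (γ₁:ℝ) / 2 * (t - a₁)⁻¹ + (γ₂:ℝ) / 2 * (t - a₂)⁻¹) ^ 2 +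
          (-((γ₀:ℝ) / 2 * ((t - a₀) ^ 2)⁻¹) + -((γ₁:ℝ) / 2 * ((t - a₁) ^ 2)⁻¹) +
            -((γ₂:ℝ) / 2 * ((t - a₂) ^ 2)⁻¹))) +
      (1 / 2) * ((t - a₀) * (t - a₁) + (t - a₀) * (t - a₂) + (t - a₁) * (t - a₂)) *
        ((γ₀:ℝ) / 2 * (t - a₀)⁻¹ + (γ₁:ℝ) / 2 * (t - a₁)⁻¹ + (γ₂:ℝ) / 2 * (t - a₂)⁻¹) =
    (1 / 4) * (((γ₀:ℝ) + γ₁ + γ₂) * (((γ₀:ℝ) + γ₁ + γ₂) + 1) * t -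
      ((a₀ + a₁) * γ₂ + (a₀ + a₂) * γ₁ + (a₁ + a₂) * γ₀ +
        2 * γ₀ * γ₁ * a₂ + 2 * γ₁ * γ₂ * a₀ + 2 * γ₀ * γ₂ * a₁)) := by
  interval_cases γ₀ <;> interval_cases γ₁ <;> interval_cases γ₂ <;>
    · push_cast
      field_simp
      try ring



/-- Change of unknown for the Lamé operator: if
`ψ = |x-α₀²|^{γ₀/2}|x-α₁²|^{γ₁/2}|x-α₂²|^{γ₂/2} φ` satisfies
`A ψ'' + ½ A' ψ' = ¼(k(k+1)x - lam)ψ`, then `φ` satisfies the generalized Lamé equation. -/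
theorem lame_change_of_unknown (a₀ a₁ a₂ lam : ℝ) (k : ℕ) (γ₀ γ₁ γ₂ : ℕ)
    (h0 : 0 < a₀) (h01 : a₀ < a₁) (h12 : a₁ < a₂)
    (hγ₀ : γ₀ ≤ 1) (hγ₁ : γ₁ ≤ 1) (hγ₂ : γ₂ ≤ 1)
    (hk : 0 < k) (hkγ : Even ((k : ℤ) - (γ₀ + γ₁ + γ₂)))
    (φ : ℝ → ℝ) (hφ : ContDiff ℝ 2 φ) :
    let A : ℝ → ℝ := fun t => (t - a₀) * (t - a₁) * (t - a₂)
    let A' : ℝ → ℝ := fun t => (t - a₀) * (t - a₁) + (t - a₀) * (t - a₂) + (t - a₁) * (t - a₂)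
    let ψ : ℝ → ℝ := fun t =>
      |t - a₀| ^ ((γ₀ : ℝ) / 2) * |t - a₁| ^ ((γ₁ : ℝ) / 2) * |t - a₂| ^ ((γ₂ : ℝ) / 2) * φ t
    let g : ℝ := (γ₀ : ℝ) + γ₁ + γ₂
    let D : ℝ := (a₀ + a₁) * γ₂ + (a₀ + a₂) * γ₁ + (a₁ + a₂) * γ₀ +
      2 * γ₀ * γ₁ * a₂ + 2 * γ₁ * γ₂ * a₀ + 2 * γ₀ * γ₂ * a₁
    (∀ t : ℝ, t ≠ a₀ → t ≠ a₁ → t ≠ a₂ →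
        A t * deriv (deriv ψ) t + (1 / 2) * A' t * deriv ψ t =
          (1 / 4) * ((k : ℝ) * ((k : ℝ) + 1) * t - lam) * ψ t) →
      ∀ t : ℝ, t ≠ a₀ → t ≠ a₁ → t ≠ a₂ →
        A t * deriv (deriv φ) t +
            (((γ₀ : ℝ) + 1 / 2) * ((t - a₁) * (t - a₂)) +
              ((γ₁ : ℝ) + 1 / 2) * ((t - a₀) * (t - a₂)) +
              ((γ₂ : ℝ) + 1 / 2) * ((t - a₀) * (t - a₁))) * deriv φ t =
          (1 / 4) * (((k : ℝ) - g) * ((k : ℝ) + g + 1) * t - lam + D) * φ t := by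
  intro A A' ψ g D hE t ht₀ ht₁ ht₂
  -- weight function and logarithmic derivative
  set w : ℝ → ℝ := fun s =>
    |s - a₀| ^ ((γ₀ : ℝ) / 2) * |s - a₁| ^ ((γ₁ : ℝ) / 2) * |s - a₂| ^ ((γ₂ : ℝ) / 2) with hw_def
  set h : ℝ → ℝ := fun s =>
    (γ₀ : ℝ) / 2 * (s - a₀)⁻¹ + (γ₁ : ℝ) / 2 * (s - a₁)⁻¹ + (γ₂ : ℝ) / 2 * (s - a₂)⁻¹ with hh_def
  have hφd : Differentiable ℝ φ := hφ.differentiable (by norm_num)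
  have hφ'd : Differentiable ℝ (deriv φ) := by
    have h2 : ContDiff ℝ ((1 : ℕ) + 1) φ := by exact_mod_cast hφ
    exact ((contDiff_succ_iff_deriv.mp h2).2.2).differentiable (by norm_num)
  -- derivative of w
  have hw : ∀ s : ℝ, s ≠ a₀ → s ≠ a₁ → s ≠ a₂ → HasDerivAt w (w s * h s) s := by
    intro s hs₀ hs₁ hs₂
    have d₀ := abs_rpow_hasDerivAt a₀ ((γ₀ : ℝ) / 2) s hs₀
    have d₁ := abs_rpow_hasDerivAt a₁ ((γ₁ : ℝ) / 2) s hs₁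
    have d₂ := abs_rpow_hasDerivAt a₂ ((γ₂ : ℝ) / 2) s hs₂
    have := (d₀.mul d₁).mul d₂
    refine HasDerivAt.congr_deriv this ?_
    simp only [hw_def, hh_def, Pi.mul_apply]
    have e₀ : s - a₀ ≠ 0 := sub_ne_zero.mpr hs₀
    have e₁ : s - a₁ ≠ 0 := sub_ne_zero.mpr hs₁
    have e₂ : s - a₂ ≠ 0 := sub_ne_zero.mpr hs₂
    field_simp
  -- derivative of ψ
  have hψ : ∀ s : ℝ, s ≠ a₀ → s ≠ a₁ → s ≠ a₂ →
      HasDerivAt ψ (w s * (deriv φ s + h s * φ s)) s := by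
    intro s hs₀ hs₁ hs₂
    have := (hw s hs₀ hs₁ hs₂).mul (hφd s).hasDerivAt
    refine HasDerivAt.congr_deriv this ?_
    ring
  have hderiv1 : ∀ s : ℝ, s ≠ a₀ → s ≠ a₁ → s ≠ a₂ →
      deriv ψ s = w s * (deriv φ s + h s * φ s) := fun s hs₀ hs₁ hs₂ =>
    (hψ s hs₀ hs₁ hs₂).deriv
  -- derivative of h
  have hh : HasDerivAt h (-((γ₀ : ℝ) / 2 * ((t - a₀) ^ 2)⁻¹) + -((γ₁ : ℝ) / 2 * ((t - a₁) ^ 2)⁻¹)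
      + -((γ₂ : ℝ) / 2 * ((t - a₂) ^ 2)⁻¹)) t := by
    have base : ∀ a : ℝ, t ≠ a → ∀ c : ℝ,
        HasDerivAt (fun s : ℝ => c * (s - a)⁻¹) (-(c * ((t - a) ^ 2)⁻¹)) t := by
      intro a ha c
      have h1 : HasDerivAt (fun s : ℝ => s - a) 1 t := by
        exact (hasDerivAt_id t).sub_const a
      have h2 := (h1.inv (sub_ne_zero.mpr ha)).const_mul c
      refine HasDerivAt.congr_deriv h2 ?_
      field_simp
    exact ((base a₀ ht₀ _).add (base a₁ ht₁ _)).add (base a₂ ht₂ _)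
  -- second derivative of ψ at t
  have hmem : ∀ᶠ s in nhds t, s ≠ a₀ ∧ s ≠ a₁ ∧ s ≠ a₂ := by
    filter_upwards [eventually_ne_nhds ht₀, eventually_ne_nhds ht₁, eventually_ne_nhds ht₂] with
      s p₀ p₁ p₂
    exact ⟨p₀, p₁, p₂⟩
  have heq : deriv ψ =ᶠ[nhds t] fun s => w s * (deriv φ s + h s * φ s) := by
    filter_upwards [hmem] with s hs
    exact hderiv1 s hs.1 hs.2.1 hs.2.2
  set h' : ℝ := -((γ₀ : ℝ) / 2 * ((t - a₀) ^ 2)⁻¹) + -((γ₁ : ℝ) / 2 * ((t - a₁) ^ 2)⁻¹)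
      + -((γ₂ : ℝ) / 2 * ((t - a₂) ^ 2)⁻¹) with hh'_def
  have hψ'' : deriv (deriv ψ) t =
      w t * (h t * (deriv φ t + h t * φ t) +
        (deriv (deriv φ) t + (h' * φ t + h t * deriv φ t))) := by
    rw [heq.deriv_eq]
    have d1 : HasDerivAt (fun s => deriv φ s + h s * φ s)
        (deriv (deriv φ) t + (h' * φ t + h t * deriv φ t)) t :=
      ((hφ'd t).hasDerivAt).add (hh.mul (hφd t).hasDerivAt)
    have d2 := (hw t ht₀ ht₁ ht₂).mul d1
    have := d2.deriv
    erw [this]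
    ring
  -- plug into hypothesis
  have hwpos : 0 < w t := by
    have p : ∀ a : ℝ, t ≠ a → ∀ c : ℝ, (0:ℝ) < |t - a| ^ c := fun a ha c =>
      Real.rpow_pos_of_pos (abs_pos.mpr (sub_ne_zero.mpr ha)) c
    exact mul_pos (mul_pos (p a₀ ht₀ _) (p a₁ ht₁ _)) (p a₂ ht₂ _)
  have hE' := hE t ht₀ ht₁ ht₂
  rw [hψ'', hderiv1 t ht₀ ht₁ ht₂] at hE'
  have hψt : ψ t = w t * φ t := rfl
  rw [hψt] at hE'
  have key : A t * (h t * (deriv φ t + h t * φ t) +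
        (deriv (deriv φ) t + (h' * φ t + h t * deriv φ t))) +
      (1 / 2) * A' t * (deriv φ t + h t * φ t) =
      (1 / 4) * ((k : ℝ) * ((k : ℝ) + 1) * t - lam) * φ t := by
    apply mul_left_cancel₀ (ne_of_gt hwpos)
    calc w t * (A t * (h t * (deriv φ t + h t * φ t) +
            (deriv (deriv φ) t + (h' * φ t + h t * deriv φ t))) +
          (1 / 2) * A' t * (deriv φ t + h t * φ t))
        = A t * (w t * (h t * (deriv φ t + h t * φ t) +
            (deriv (deriv φ) t + (h' * φ t + h t * deriv φ t)))) +
          (1 / 2) * A' t * (w t * (deriv φ t + h t * φ t)) := by ring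
      _ = (1 / 4) * ((k : ℝ) * ((k : ℝ) + 1) * t - lam) * (w t * φ t) := hE'
      _ = w t * ((1 / 4) * ((k : ℝ) * ((k : ℝ) + 1) * t - lam) * φ t) := by ring
  have e₀ : t - a₀ ≠ 0 := sub_ne_zero.mpr ht₀
  have e₁ : t - a₁ ≠ 0 := sub_ne_zero.mpr ht₁
  have e₂ : t - a₂ ≠ 0 := sub_ne_zero.mpr ht₂
  have I1 := lame_I1 a₀ a₁ a₂ t (γ₀ : ℝ) (γ₁ : ℝ) (γ₂ : ℝ) e₀ e₁ e₂
  have I2 := lame_I2 γ₀ γ₁ γ₂ hγ₀ hγ₁ hγ₂ a₀ a₁ a₂ t e₀ e₁ e₂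
  simp only [A, A', g, D, hh_def, hh'_def] at key I1 I2 ⊢
  linear_combination key - deriv φ t * I1 - φ t * I2
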